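/- For every tree T on n ≥ 2 vertices, σ_t(T) ≥ 2n - 4, with equality if and only if T is the path P_n. -/

import Mathlib

open Finset

noncomputable def sigmaT {V : Type*} [Fintype V] (G : SimpleGraph V) [DecidableRel G.Adj] : ℝ :=
  (∑ u : V, ∑ v : V, ((G.degree u : ℝ) - (G.degree v : ℝ)) ^ 2) / 2

namespace Stmt16Aux

open SimpleGraph

instance (n : ℕ) : DecidableRel (pathGraph n).Adj := fun a b =>
  decidable_of_iff (a.val + 1 = b.val ∨ b.val + 1 = a.val) pathGraph_adj.symm

/-- A downward-closed finset of naturals is an initial range. -/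
lemma dc_range (s : Finset ℕ) (h : ∀ k, k + 1 ∈ s → k ∈ s) : s = Finset.range s.card := by
  have hdc : ∀ d k, k + d ∈ s → k ∈ s := by
    intro d
    induction d with
    | zero => intro k hk; simpa using hk
    | succ d ih =>
      intro k hk
      have he : (k + 1) + d = k + (d + 1) := by omega
      exact h k (ih (k + 1) (by rw [he]; exact hk))
  ext k
  simp only [Finset.mem_range]
  constructor
  · intro hk
    have hsub : Finset.range (k + 1) ⊆ s := by
      intro j hj
      simp only [Finset.mem_range] at hj
      exact hdc (k - j) j (by rw [show j + (k - j) = k by omega]; exact hk)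
    have := Finset.card_le_card hsub
    simp only [Finset.card_range] at this
    omega
  · intro hk
    by_contra hks
    have hsub : s ⊆ Finset.range k := by
      intro m hm
      simp only [Finset.mem_range]
      by_contra hmk
      exact hks (hdc (m - k) k (by rw [show k + (m - k) = m by omega]; exact hm))
    have := Finset.card_le_card hsub
    simp only [Finset.card_range] at this
    omega

variable {V : Type*} [Fintype V]

lemma sum_sq_identity (d : V → ℝ) (n : ℕ) (hn : n = Fintype.card V) :
    (∑ u : V, ∑ v : V, (d u - d v) ^ 2) / 2
      = (n : ℝ) * (∑ v, (d v) ^ 2) - (∑ v, d v) ^ 2 := by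
  have e2 : ∀ u : V, ∑ v : V, (d u - d v) ^ 2
      = (Fintype.card V : ℝ) * (d u) ^ 2 - 2 * (d u * ∑ v, d v) + ∑ v, (d v) ^ 2 := by
    intro u
    have h : ∀ v, (d u - d v) ^ 2 = (d u ^ 2 - 2 * (d u * d v)) + d v ^ 2 := fun v => by ring
    rw [Finset.sum_congr rfl fun v _ => h v, Finset.sum_add_distrib, Finset.sum_sub_distrib,
      ← Finset.mul_sum, ← Finset.mul_sum, Finset.sum_const, Finset.card_univ, nsmul_eq_mul]
  rw [Finset.sum_congr rfl fun u _ => e2 u, Finset.sum_add_distrib, Finset.sum_sub_distrib,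
    ← Finset.mul_sum, ← Finset.mul_sum, ← Finset.sum_mul, Finset.sum_const, Finset.card_univ,
    nsmul_eq_mul, ← hn]
  ring

lemma sum_shift (d : V → ℝ) (n : ℕ) (hn : n = Fintype.card V) :
    ∑ v : V, (d v - 1) * (d v - 2)
      = (∑ v, (d v) ^ 2) - 3 * (∑ v, d v) + 2 * (n : ℝ) := by
  have h : ∀ v, (d v - 1) * (d v - 2) = (d v ^ 2 - 3 * d v) + 2 := fun v => by ring
  rw [Finset.sum_congr rfl fun v _ => h v, Finset.sum_add_distrib, Finset.sum_sub_distrib,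
    ← Finset.mul_sum, Finset.sum_const, Finset.card_univ, nsmul_eq_mul, ← hn]
  ring

lemma degree_ge_one {G : SimpleGraph V} [DecidableRel G.Adj] (hc : G.Connected)
    (h2 : 2 ≤ Fintype.card V) (v : V) : 1 ≤ G.degree v := by
  obtain ⟨w, hw⟩ := Fintype.exists_ne_of_one_lt_card (by omega) v
  obtain ⟨p⟩ := hc.preconnected v w
  cases p with
  | nil => exact absurd rfl hw
  | cons h q => exact (G.degree_pos_iff_exists_adj v).mpr ⟨_, h⟩

lemma iso_degree {W : Type*} [Fintype W] {G : SimpleGraph V} {H : SimpleGraph W}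
    [DecidableRel G.Adj] [DecidableRel H.Adj] (φ : G ≃g H) (v : V) :
    G.degree v = H.degree (φ v) := by
  rw [← SimpleGraph.card_neighborSet_eq_degree, ← SimpleGraph.card_neighborSet_eq_degree]
  exact Fintype.card_congr (φ.mapNeighborSet v)

lemma pathGraph_degree_le (n : ℕ) (i : Fin n) : (pathGraph n).degree i ≤ 2 := by
  classical
  rw [← SimpleGraph.card_neighborFinset_eq_degree]
  have h := Finset.card_le_card_of_injOn (f := Fin.val)
    (t := ({i.val + 1, i.val - 1} : Finset ℕ)) (s := (pathGraph n).neighborFinset i)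
    ?_ ?_
  · refine h.trans ?_
    exact (Finset.card_insert_le _ _).trans (by simp)
  · intro j hj
    rw [Finset.mem_coe, SimpleGraph.mem_neighborFinset, pathGraph_adj] at hj
    simp only [Finset.mem_coe, Finset.mem_insert, Finset.mem_singleton]
    omega
  · intro a _ b _ hab
    exact Fin.val_injective hab

/-- A tree on `n ≥ 2` vertices with all degrees between 1 and 2 is a path graph. -/
lemma iso_of_deg (T : SimpleGraph V) [DecidableRel T.Adj] (htree : T.IsTree)
    (n : ℕ) (hn : n = Fintype.card V) (hn2 : 2 ≤ n)
    (hdeglb : ∀ v, 1 ≤ T.degree v) (hdegub : ∀ v, T.degree v ≤ 2) :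
    Nonempty (T ≃g pathGraph n) := by
  classical
  have hc := htree.isConnected
  have hedge : T.edgeFinset.card + 1 = Fintype.card V := htree.card_edgeFinset
  have hsumN : ∑ v, T.degree v = 2 * (n - 1) := by
    rw [SimpleGraph.sum_degrees_eq_twice_card_edges]; omega
  -- find a leaf
  have hleaf : ∃ v0, T.degree v0 = 1 := by
    by_contra hno
    push_neg at hno
    have h2 : ∀ v, T.degree v = 2 := fun v => by
      have h1 := hdeglb v; have h2 := hdegub v; have h3 := hno v; omega
    have hs : ∑ v, T.degree v = 2 * n := by
      rw [Finset.sum_congr rfl fun v _ => h2 v, Finset.sum_const, Finset.card_univ,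
        smul_eq_mul, ← hn, mul_comm]
    omega
  obtain ⟨v0, hv0⟩ := hleaf
  -- stepping one closer to v0
  have hstep : ∀ v, T.dist v0 v ≠ 0 → ∃ u, T.Adj u v ∧ T.dist v0 u + 1 = T.dist v0 v := by
    intro v hv
    obtain ⟨p, hp⟩ := hc.exists_walk_length_eq_dist v v0
    cases p with
    | nil =>
      simp only [Walk.length_nil] at hp
      rw [SimpleGraph.dist_comm] at hv
      omega
    | @cons _ b _ h q =>
      refine ⟨b, h.symm, ?_⟩
      have h1 : T.dist v0 b ≤ q.length := by
        rw [SimpleGraph.dist_comm]; exact SimpleGraph.dist_le q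
      have h2 : T.dist v0 v ≤ T.dist v0 b + T.dist b v := hc.dist_triangle
      have h3 : T.dist b v ≤ 1 := by
        have := SimpleGraph.dist_le (Walk.cons h.symm Walk.nil)
        simpa using this
      have h4 : q.length + 1 = T.dist v0 v := by
        rw [SimpleGraph.dist_comm]
        simpa using hp
      omega
  -- levels have at most one vertex
  have hinj : ∀ k, ∀ u v : V, T.dist v0 u = k → T.dist v0 v = k → u = v := by
    intro k
    induction k using Nat.strong_induction_on with
    | _ k ih =>
      match k with
      | 0 =>
        intro u v hu hv
        rw [← hc.dist_eq_zero_iff.mp hu, ← hc.dist_eq_zero_iff.mp hv]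
      | 1 =>
        intro u v hu hv
        obtain ⟨a, haadj, ha⟩ := hstep u (by omega)
        obtain ⟨b, hbadj, hb⟩ := hstep v (by omega)
        have ha0 : a = v0 := (hc.dist_eq_zero_iff.mp (by omega)).symm
        have hb0 : b = v0 := (hc.dist_eq_zero_iff.mp (by omega)).symm
        rw [ha0] at haadj
        rw [hb0] at hbadj
        have hcard : (T.neighborFinset v0).card ≤ 1 := by
          rw [SimpleGraph.card_neighborFinset_eq_degree, hv0]
        refine Finset.card_le_one.mp hcard u ?_ v ?_ <;>
          rw [SimpleGraph.mem_neighborFinset] <;> assumption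
      | (m + 2) =>
        intro u v hu hv
        by_contra hne
        obtain ⟨a, haadj, ha⟩ := hstep u (by omega)
        obtain ⟨b, hbadj, hb⟩ := hstep v (by omega)
        have hab : a = b := ih (m + 1) (by omega) a b (by omega) (by omega)
        subst hab
        obtain ⟨c, hcadj, hcd⟩ := hstep a (by omega)
        have hu_ne_c : u ≠ c := fun h => by rw [h] at hu; omega
        have hv_ne_c : v ≠ c := fun h => by rw [h] at hv; omega
        have hsub : ({u, v, c} : Finset V) ⊆ T.neighborFinset a := by
          intro x hx
          simp only [Finset.mem_insert, Finset.mem_singleton] at hx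
          rw [SimpleGraph.mem_neighborFinset]
          rcases hx with rfl | rfl | rfl
          · exact haadj
          · exact hbadj
          · exact hcadj.symm
        have hcard3 : ({u, v, c} : Finset V).card = 3 := by
          rw [Finset.card_insert_of_notMem (by simp [hne, hu_ne_c]),
            Finset.card_insert_of_notMem (by simp [hv_ne_c]), Finset.card_singleton]
        have h1 := Finset.card_le_card hsub
        rw [hcard3, SimpleGraph.card_neighborFinset_eq_degree] at h1
        have h2 := hdegub a
        omega
  have hfinj : Function.Injective (fun v => T.dist v0 v) := by
    intro u v h
    exact hinj (T.dist v0 u) u v rfl ((by simpa using h) : T.dist v0 u = T.dist v0 v).symm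
  have himg : Finset.image (fun v => T.dist v0 v) Finset.univ = Finset.range n := by
    have hcard : (Finset.image (fun v => T.dist v0 v) Finset.univ).card = n := by
      rw [Finset.card_image_of_injective _ hfinj, Finset.card_univ, hn]
    rw [← hcard]
    apply dc_range
    intro k hk
    simp only [Finset.mem_image, Finset.mem_univ, true_and] at hk ⊢
    obtain ⟨v, hv⟩ := hk
    obtain ⟨u, _, hu⟩ := hstep v (by omega)
    exact ⟨u, by omega⟩
  have hlt : ∀ v, T.dist v0 v < n := by
    intro v
    have : T.dist v0 v ∈ Finset.range n :=
      himg ▸ Finset.mem_image_of_mem _ (Finset.mem_univ v)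
    simpa using this
  have hbij : Function.Bijective (fun v => (⟨T.dist v0 v, hlt v⟩ : Fin n)) := by
    rw [Fintype.bijective_iff_injective_and_card]
    constructor
    · intro u v h
      exact hinj (T.dist v0 u) u v rfl (congrArg Fin.val h).symm
    · simp [hn]
  refine ⟨{ toEquiv := Equiv.ofBijective _ hbij, map_rel_iff' := ?_ }⟩
  intro u v
  rw [pathGraph_adj]
  simp only [Equiv.ofBijective_apply]
  show (T.dist v0 u + 1 = T.dist v0 v ∨ T.dist v0 v + 1 = T.dist v0 u) ↔ T.Adj u v
  constructor
  · rintro (h | h)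
    · obtain ⟨w, hwadj, hw⟩ := hstep v (by omega)
      have hwu : w = u := hinj (T.dist v0 w) w u rfl (by omega)
      rw [← hwu]; exact hwadj
    · obtain ⟨w, hwadj, hw⟩ := hstep u (by omega)
      have hwv : w = v := hinj (T.dist v0 w) w v rfl (by omega)
      rw [← hwv]; exact hwadj.symm
  · intro h
    have h1 : T.dist v0 v ≤ T.dist v0 u + T.dist u v := hc.dist_triangle
    have h2 : T.dist v0 u ≤ T.dist v0 v + T.dist v u := hc.dist_triangle
    have h3 : T.dist u v ≤ 1 := by
      have := SimpleGraph.dist_le (Walk.cons h Walk.nil)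
      simpa using this
    have h4 : T.dist v u ≤ 1 := by
      have := SimpleGraph.dist_le (Walk.cons h.symm Walk.nil)
      simpa using this
    have hne : T.dist v0 u ≠ T.dist v0 v := fun he => h.ne (hinj _ u v rfl he.symm)
    omega

end Stmt16Aux

open Stmt16Aux SimpleGraph in
theorem stmt16 {V : Type*} [Fintype V] (T : SimpleGraph V) [DecidableRel T.Adj]
    (htree : T.IsTree) (n : ℕ) (hn : n = Fintype.card V) (hn2 : 2 ≤ n) :
    sigmaT T ≥ 2 * (n : ℝ) - 4 ∧
      (sigmaT T = 2 * (n : ℝ) - 4 ↔ Nonempty (T ≃g SimpleGraph.pathGraph n)) := by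
  classical
  have hc := htree.isConnected
  have hedge : T.edgeFinset.card + 1 = Fintype.card V := htree.card_edgeFinset
  have hsumN : ∑ v, T.degree v = 2 * (n - 1) := by
    rw [SimpleGraph.sum_degrees_eq_twice_card_edges]; omega
  have hD : ∑ v, (T.degree v : ℝ) = 2 * (n : ℝ) - 2 := by
    have h := congrArg (Nat.cast : ℕ → ℝ) hsumN
    push_cast [Nat.cast_sub (by omega : 1 ≤ n)] at h
    rw [h]; ring
  have h1 : sigmaT T = (n : ℝ) * (∑ v, (T.degree v : ℝ) ^ 2)
      - (∑ v, (T.degree v : ℝ)) ^ 2 := by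
    unfold sigmaT
    exact sum_sq_identity _ n hn
  have h2 : ∑ v : V, ((T.degree v : ℝ) - 1) * ((T.degree v : ℝ) - 2)
      = (∑ v, (T.degree v : ℝ) ^ 2) - 3 * (∑ v, (T.degree v : ℝ)) + 2 * (n : ℝ) :=
    sum_shift _ n hn
  have key : sigmaT T
      = (n : ℝ) * (∑ v : V, ((T.degree v : ℝ) - 1) * ((T.degree v : ℝ) - 2))
        + 2 * (n : ℝ) - 4 := by
    rw [h1, h2, hD]; ring
  have htermnn : ∀ v : V, (0:ℝ) ≤ ((T.degree v : ℝ) - 1) * ((T.degree v : ℝ) - 2) := by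
    intro v
    rcases Nat.lt_or_ge (T.degree v) 2 with h | h
    · have hv1 : (T.degree v : ℝ) ≤ 1 := by exact_mod_cast Nat.lt_succ_iff.mp h
      nlinarith
    · have hv1 : (2:ℝ) ≤ (T.degree v : ℝ) := by exact_mod_cast h
      nlinarith
  have hPnn : (0:ℝ) ≤ ∑ v : V, ((T.degree v : ℝ) - 1) * ((T.degree v : ℝ) - 2) :=
    Finset.sum_nonneg fun v _ => htermnn v
  have hnpos : (0:ℝ) < (n : ℝ) := by exact_mod_cast (by omega : 0 < n)
  constructor
  · have hm : (0:ℝ) ≤ (n : ℝ) * ∑ v : V, ((T.degree v : ℝ) - 1) * ((T.degree v : ℝ) - 2) :=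
      mul_nonneg (le_of_lt hnpos) hPnn
    linarith [key]
  · constructor
    · intro heq
      have hP0 : ∑ v : V, ((T.degree v : ℝ) - 1) * ((T.degree v : ℝ) - 2) = 0 := by
        have hz : (n : ℝ) * ∑ v : V, ((T.degree v : ℝ) - 1) * ((T.degree v : ℝ) - 2) = 0 := by
          linarith [key]
        rcases mul_eq_zero.mp hz with h | h
        · exact absurd h (ne_of_gt hnpos)
        · exact h
      have hdeg12 : ∀ v : V, T.degree v = 1 ∨ T.degree v = 2 := by
        intro v
        have hv := (Finset.sum_eq_zero_iff_of_nonneg fun v _ => htermnn v).mp hP0 v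
          (Finset.mem_univ v)
        rcases mul_eq_zero.mp hv with h | h
        · left
          have : (T.degree v : ℝ) = 1 := by linarith
          exact_mod_cast this
        · right
          have : (T.degree v : ℝ) = 2 := by linarith
          exact_mod_cast this
      exact iso_of_deg T htree n hn hn2
        (fun v => by rcases hdeg12 v with h | h <;> omega)
        (fun v => by rcases hdeg12 v with h | h <;> omega)
    · rintro ⟨φ⟩
      have hP0 : ∑ v : V, ((T.degree v : ℝ) - 1) * ((T.degree v : ℝ) - 2) = 0 := by
        apply Finset.sum_eq_zero
        intro v _
        have hub : T.degree v ≤ 2 := by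
          rw [iso_degree φ v]; exact pathGraph_degree_le n (φ v)
        have hlb : 1 ≤ T.degree v := degree_ge_one hc (hn ▸ hn2) v
        have : T.degree v = 1 ∨ T.degree v = 2 := by omega
        rcases this with h | h <;> rw [h] <;> norm_num
      rw [key, hP0]; ring
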